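/- Let n ≥ 5 be odd and consider the cycle C_{2n} on vertices v_0,…,v_{2n−1} with terminal pairs S = {{v_i, v_{i+n}} : 0 ≤ i < n}. Assign weight 1 to edges with odd index and weight 2 to edges with even index. Then every S-multicut has total weight at least 3. -/

import Mathlib

/-- The cycle graph on `Fin m`, with vertex `i` adjacent to `i ± 1`. -/
def cycleG (m : ℕ) [NeZero m] : SimpleGraph (Fin m) :=
  SimpleGraph.fromRel (fun a b => b = a + 1)

open Fin.NatCast Fin.CommRing

lemma val_add_nat {m : ℕ} [NeZero m] (c : Fin m) (t : ℕ) :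
    (c + (t : Fin m)).val = (c.val + t) % m := by
  rw [Fin.val_add, Fin.val_natCast, Nat.add_mod_mod]

lemma mod_cases_aux {m x j z : ℕ} (hx : x < m) (hj : j < m) (hz : z < m)
    (h : (x + j) % m = z) : x + j = z ∨ x + j = m + z := by
  rcases lt_or_ge (x + j) m with h1 | h1
  · left; rwa [Nat.mod_eq_of_lt h1] at h
  · right
    rw [Nat.mod_eq_sub_mod h1, Nat.mod_eq_of_lt (by omega)] at h
    omega

lemma fin_add_eq {m : ℕ} [NeZero m] (c a : Fin m) (t : ℕ) (ht : t < m)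
    (h : c + (t : Fin m) = a) : c.val + t = a.val ∨ c.val + t = m + a.val := by
  have hv : (c.val + t) % m = a.val := by rw [← val_add_nat c t, h]
  exact mod_cases_aux c.isLt ht a.isLt hv

lemma fin_shift {m : ℕ} [NeZero m] (c : Fin m) (j : ℕ) :
    (c + 1) + (j : Fin m) = c + ((1 + j : ℕ) : Fin m) := by
  push_cast; ring

lemma one_ne_zero_fin {m : ℕ} [NeZero m] (hm : 2 < m) : (1 : Fin m) ≠ 0 := by
  intro h1
  have := congrArg Fin.val h1
  rw [Fin.val_one'] at this
  rw [Nat.mod_eq_of_lt (by omega)] at this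
  simp at this

lemma reach_aux (m : ℕ) [NeZero m] (hm : 2 < m) (E : Set (Sym2 (Fin m)))
    (k : ℕ) (i : Fin m)
    (h : ∀ j < k, s(i + (j : Fin m), i + (j : Fin m) + 1) ∉ E) :
    ((cycleG m).deleteEdges E).Reachable i (i + (k : Fin m)) := by
  induction k with
  | zero => simpa using SimpleGraph.Reachable.refl i
  | succ k ih =>
    refine (ih (fun j hj => h j (by omega))).trans (SimpleGraph.Adj.reachable ?_)
    have hcast : ((k + 1 : ℕ) : Fin m) = (k : Fin m) + 1 := by push_cast; ring
    rw [hcast, ← add_assoc]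
    have hne : (i + (k : Fin m)) ≠ (i + (k : Fin m)) + 1 := by
      intro hEq
      exact one_ne_zero_fin hm (left_eq_add.mp hEq)
    rw [SimpleGraph.deleteEdges_adj]
    exact ⟨by rw [cycleG, SimpleGraph.fromRel_adj]; exact ⟨hne, Or.inl rfl⟩, h k (by omega)⟩

/-- Let `n ≥ 5` be odd and consider the cycle `C_{2n}` with terminal pairs
`{{v_i, v_{i+n}}}`. Edge `i` is `v_i v_{i+1}`; odd-indexed edges get weight `1`
and even-indexed edges weight `2`. Then every `S`-multicut has total weight at
least `3`. -/
theorem moebius_cycle_inequality_valid (n : ℕ) [NeZero (2 * n)] (hn : 5 ≤ n) (hodd : Odd n)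
    (δ : Finset (Fin (2 * n)))
    (hmc : ∀ i : Fin (2 * n),
      ¬ ((cycleG (2 * n)).deleteEdges
          ((fun i : Fin (2 * n) => s(i, i + 1)) '' (δ : Set (Fin (2 * n))))).Reachable
        i (i + Fin.ofNat (2 * n) n)) :
    3 ≤ ∑ i ∈ δ, (if (i : ℕ) % 2 = 1 then (1 : ℝ) else 2) := by
  by_contra hlt
  push_neg at hlt
  have hm : 10 ≤ 2 * n := by omega
  have hpn : n % 2 = 1 := Nat.odd_iff.mp hodd
  have hone : ∀ i ∈ δ, (1 : ℝ) ≤ (if (i : ℕ) % 2 = 1 then (1 : ℝ) else 2) := by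
    intro i _; split <;> norm_num
  have hcard : δ.card ≤ 2 := by
    by_contra hc
    push_neg at hc
    have h1 := Finset.card_nsmul_le_sum δ _ 1 hone
    simp only [nsmul_eq_mul, mul_one] at h1
    have h2 : (3 : ℝ) ≤ (δ.card : ℝ) := by exact_mod_cast hc
    linarith
  have key : ∃ i : Fin (2 * n), ∀ j < n, i + (j : Fin (2 * n)) ∉ δ := by
    interval_cases h : δ.card
    · refine ⟨0, fun j hj hmem => ?_⟩
      rw [Finset.card_eq_zero] at h
      simp [h] at hmem
    · obtain ⟨a, ha⟩ := Finset.card_eq_one.mp h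
      refine ⟨a + 1, fun j hj hmem => ?_⟩
      rw [ha, Finset.mem_singleton] at hmem
      rw [fin_shift] at hmem
      have ha2 := a.isLt
      rcases fin_add_eq a a (1 + j) (by omega) hmem with h' | h' <;> omega
    · obtain ⟨a, b, hab, hδ⟩ := Finset.card_eq_two.mp h
      have hsum : ∑ i ∈ δ, (if (i : ℕ) % 2 = 1 then (1 : ℝ) else 2) =
          (if (a : ℕ) % 2 = 1 then (1 : ℝ) else 2) +
          (if (b : ℕ) % 2 = 1 then (1 : ℝ) else 2) := by
        rw [hδ, Finset.sum_pair hab]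
      have hpa : (a : ℕ) % 2 = 1 := by
        by_contra h'
        rw [hsum, if_neg h'] at hlt
        have : (1 : ℝ) ≤ (if (b : ℕ) % 2 = 1 then (1 : ℝ) else 2) := by split <;> norm_num
        linarith
      have hpb : (b : ℕ) % 2 = 1 := by
        by_contra h'
        rw [hsum, if_neg h'] at hlt
        have : (1 : ℝ) ≤ (if (a : ℕ) % 2 = 1 then (1 : ℝ) else 2) := by split <;> norm_num
        linarith
      have haneb : a.val ≠ b.val := fun h' => hab (Fin.ext h')
      have ha2 := a.isLt
      have hb2 := b.isLt
      rcases lt_or_gt_of_ne haneb with hord | hord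
      · rcases lt_or_gt_of_ne (show b.val - a.val ≠ n by intro h'; omega) with hd | hd
        · refine ⟨b + 1, fun j hj hmem => ?_⟩
          rw [hδ, Finset.mem_insert, Finset.mem_singleton] at hmem
          rcases hmem with hmem | hmem <;>
          · rw [fin_shift] at hmem
            rcases fin_add_eq _ _ (1 + j) (by omega) hmem with h' | h' <;> omega
        · refine ⟨a + 1, fun j hj hmem => ?_⟩
          rw [hδ, Finset.mem_insert, Finset.mem_singleton] at hmem
          rcases hmem with hmem | hmem <;>
          · rw [fin_shift] at hmem
            rcases fin_add_eq _ _ (1 + j) (by omega) hmem with h' | h' <;> omega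
      · rcases lt_or_gt_of_ne (show a.val - b.val ≠ n by intro h'; omega) with hd | hd
        · refine ⟨a + 1, fun j hj hmem => ?_⟩
          rw [hδ, Finset.mem_insert, Finset.mem_singleton] at hmem
          rcases hmem with hmem | hmem <;>
          · rw [fin_shift] at hmem
            rcases fin_add_eq _ _ (1 + j) (by omega) hmem with h' | h' <;> omega
        · refine ⟨b + 1, fun j hj hmem => ?_⟩
          rw [hδ, Finset.mem_insert, Finset.mem_singleton] at hmem
          rcases hmem with hmem | hmem <;>
          · rw [fin_shift] at hmem
            rcases fin_add_eq _ _ (1 + j) (by omega) hmem with h' | h' <;> omega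
  obtain ⟨i, hi⟩ := key
  apply hmc i
  apply reach_aux (2 * n) (by omega)
  intro j hj hmem
  obtain ⟨x, hx, heq⟩ := hmem
  rcases Sym2.eq_iff.mp heq with ⟨h1, h2⟩ | ⟨h1, h2⟩
  · exact hi j hj (h1 ▸ hx)
  · have hx2 : x = x + 2 := by
      nth_rewrite 1 [h1, ← h2]; ring
    have h20 : ((2 : ℕ) : Fin (2 * n)) = 0 := by
      have := left_eq_add.mp hx2
      simpa using this
    have := congrArg Fin.val h20
    rw [Fin.val_natCast, Nat.mod_eq_of_lt (by omega)] at this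
    simp at this
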